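/- There exists an absolute constant C such that when algorithm Quadruple-Round is executed on a channel with collision detection against a 1-activating adversary of type (3/8, b), in every round of every admissible execution the total number of packets stored in the queues of the active stations is at most b + C. -/

import Mathlib

/-- Remove one packet from the queue of station `i` (stations of a segment are indexed
`0, 1, 2, 3`; `q i` is the number of packets pending at station `i`). -/
def deqQR (q : ℕ → ℕ) (i : ℕ) : ℕ → ℕ := fun j => if j = i then q j - 1 else q j

/-- The number of active stations of a segment. -/
def activeCountQR (q : ℕ → ℕ) : ℕ :=
  (if q 0 = 0 then 0 else 1) + (if q 1 = 0 then 0 else 1) +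
    (if q 2 = 0 then 0 else 1) + (if q 3 = 0 then 0 else 1)

/-- One iteration of a phase of algorithm Quadruple-Round, for a segment whose stations
currently hold the packet counts `q` (with at least one active station).  It returns the
list of the rounds of the iteration — each entry `some i` meaning that a packet of station
`i` is heard in that round and `none` meaning a void round (collision or silence) — and
the resulting packet counts.  In the first round all active stations of the segment
transmit: if only one station is active its packet is heard and the iteration ends; after
a collision the stations of the left pair (0 and 1) transmit in the second round: if both
are active this is a collision and stations 0 and 1 then transmit singly in the third and
fourth rounds; if exactly one is active its packet is heard, ending the iteration; if the
second round is silent, the right-pair stations 2 and 3 transmit singly in the third and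
fourth rounds. -/
def iterQR (q : ℕ → ℕ) : List (Option ℕ) × (ℕ → ℕ) :=
  if activeCountQR q = 1 then
    let i := if q 0 ≠ 0 then 0 else if q 1 ≠ 0 then 1 else if q 2 ≠ 0 then 2 else 3
    ([some i], deqQR q i)
  else if q 0 ≠ 0 ∧ q 1 ≠ 0 then ([none, none, some 0, some 1], deqQR (deqQR q 0) 1)
  else if q 0 ≠ 0 then ([none, some 0], deqQR q 0)
  else if q 1 ≠ 0 then ([none, some 1], deqQR q 1)
  else ([none, none, some 2, some 3], deqQR (deqQR q 2) 3)

/-- The trace of a phase (fuelled version): iterations repeat until all stations of the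
segment are passive, and a final silent round ends the phase. -/
def phaseTraceAux : ℕ → (ℕ → ℕ) → List (Option ℕ)
  | 0, _ => []
  | fuel + 1, q =>
    if q 0 = 0 ∧ q 1 = 0 ∧ q 2 = 0 ∧ q 3 = 0 then [none]
    else (iterQR q).1 ++ phaseTraceAux fuel (iterQR q).2

/-- The round-by-round trace of the phase processing a segment whose four stations hold
the packet counts `q`. -/
def phaseTrace (q : ℕ → ℕ) : List (Option ℕ) :=
  phaseTraceAux (q 0 + q 1 + q 2 + q 3 + 1) q

/-- The number of rounds taken by the phase processing a segment with packet counts `q`. -/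
def phaseLen (q : ℕ → ℕ) : ℕ := (phaseTrace q).length

/-- Admissibility of a 1-activating injection pattern `a` (in round `t`, a fresh passive
station labelled `t` is activated with `a t` packets, when `a t > 0`) for the leaky-bucket
adversary of type `(ρ, b)`. -/
def Admissible (ρ : ℝ) (b : ℕ) (a : ℕ → ℕ) : Prop :=
  ∀ s n : ℕ, ((∑ t ∈ Finset.Ico s (s + n), a t : ℕ) : ℝ) ≤ ρ * n + b

/-- The packet counts of the four stations of segment `j` (segment `j` consists of the
rounds `4j, …, 4j + 3`; against a 1-activating adversary each station holds exactly the
packets injected at its activation). -/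
def segQ (a : ℕ → ℕ) (j : ℕ) : ℕ → ℕ := fun i => a (4 * j + i)

/-- The first round of the phase processing segment `j`: phases are executed one after the
other, and the phase of a segment starts only after at least four rounds have passed since
the first round of the segment. -/
def phaseStart (a : ℕ → ℕ) : ℕ → ℕ
  | 0 => 4
  | j + 1 => max (phaseStart a j + phaseLen (segQ a j)) (4 * (j + 1) + 4)

/-- The number of packets of station `v` heard (in the phase of its segment `v / 4`)
strictly before round `t`. -/
def heardBefore (a : ℕ → ℕ) (v t : ℕ) : ℕ :=
  ((List.range (phaseTrace (segQ a (v / 4))).length).filter fun off =>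
      decide (phaseStart a (v / 4) + off < t) &&
      decide ((phaseTrace (segQ a (v / 4))).getD off none = some (v % 4))).length

/-- The number of packets pending at station `v` at the beginning of round `t` in the
execution of Quadruple-Round against the 1-activating injection pattern `a`. -/
def pendingQR (a : ℕ → ℕ) (v t : ℕ) : ℕ := a v - heardBefore a v t


/- ===================== auxiliary development ===================== -/

def cnt4 (l : List (Option ℕ)) : ℕ :=
  l.count (some 0) + l.count (some 1) + l.count (some 2) + l.count (some 3)

lemma iter_spec (q : ℕ → ℕ) (h : ¬(q 0 = 0 ∧ q 1 = 0 ∧ q 2 = 0 ∧ q 3 = 0)) :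
    (∀ i, i < 4 → ((iterQR q).1.count (some i)) + (iterQR q).2 i = q i) ∧
    (iterQR q).1.length ≤ 2 * cnt4 (iterQR q).1 ∧
    1 ≤ cnt4 (iterQR q).1 ∧
    (∀ r, r ≤ (iterQR q).1.length → r ≤ 2 * cnt4 ((iterQR q).1.take r) + 2) := by
  by_cases h0 : q 0 = 0 <;> by_cases h1 : q 1 = 0 <;> by_cases h2 : q 2 = 0 <;>
    by_cases h3 : q 3 = 0 <;>
  simp only [iterQR, activeCountQR, h0, h1, h2, h3, if_true, if_false, ne_eq,
    not_false_iff, not_true, and_true, and_false, false_and, true_and, ite_true, ite_false,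
    not_not, Nat.reduceAdd, Nat.reduceEqDiff, reduceIte] <;>
  first
  | (refine ⟨fun i hi => ?_, by decide, by decide, fun r hr => ?_⟩
     · interval_cases i <;> simp [deqQR] <;> omega
     · simp only [List.length_cons, List.length_nil, Nat.reduceAdd] at hr
       interval_cases r <;> decide)
  | (exact absurd ⟨h0, h1, h2, h3⟩ h)

lemma iter_sum (q : ℕ → ℕ) (h : ¬(q 0 = 0 ∧ q 1 = 0 ∧ q 2 = 0 ∧ q 3 = 0)) :
    (iterQR q).2 0 + (iterQR q).2 1 + (iterQR q).2 2 + (iterQR q).2 3 + cnt4 (iterQR q).1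
      = q 0 + q 1 + q 2 + q 3 := by
  have h0 := (iter_spec q h).1 0 (by norm_num)
  have h1 := (iter_spec q h).1 1 (by norm_num)
  have h2 := (iter_spec q h).1 2 (by norm_num)
  have h3 := (iter_spec q h).1 3 (by norm_num)
  unfold cnt4; omega

lemma trace_count (fuel : ℕ) : ∀ q : ℕ → ℕ, q 0 + q 1 + q 2 + q 3 < fuel → ∀ i, i < 4 →
    (phaseTraceAux fuel q).count (some i) = q i := by
  induction fuel with
  | zero => intro q hq; omega
  | succ n ih =>
    intro q hq i hi
    by_cases hz : q 0 = 0 ∧ q 1 = 0 ∧ q 2 = 0 ∧ q 3 = 0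
    · have : q i = 0 := by interval_cases i <;> omega
      simp [phaseTraceAux, hz, this]
    · have hsum := iter_sum q hz
      have hlt : (iterQR q).2 0 + (iterQR q).2 1 + (iterQR q).2 2 + (iterQR q).2 3 < n := by
        have := (iter_spec q hz).2.2.1; omega
      have hct := (iter_spec q hz).1 i hi
      simp only [phaseTraceAux, hz, if_false, List.count_append, ite_false]
      rw [ih _ hlt i hi]; omega

lemma trace_len (fuel : ℕ) : ∀ q : ℕ → ℕ, q 0 + q 1 + q 2 + q 3 < fuel →
    (phaseTraceAux fuel q).length ≤ 2 * (q 0 + q 1 + q 2 + q 3) + 1 := by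
  induction fuel with
  | zero => intro q hq; omega
  | succ n ih =>
    intro q hq
    by_cases hz : q 0 = 0 ∧ q 1 = 0 ∧ q 2 = 0 ∧ q 3 = 0
    · rw [show phaseTraceAux (n+1) q = [none] from by simp [phaseTraceAux, hz]]
      simp only [List.length_cons, List.length_nil]; omega
    · have hsum := iter_sum q hz
      have h1 := (iter_spec q hz).2.1
      have h2 := (iter_spec q hz).2.2.1
      have hlt : (iterQR q).2 0 + (iterQR q).2 1 + (iterQR q).2 2 + (iterQR q).2 3 < n := by omega
      have := ih _ hlt
      simp only [phaseTraceAux, hz, if_false, List.length_append, ite_false]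
      omega

lemma trace_prefix (fuel : ℕ) : ∀ q : ℕ → ℕ, q 0 + q 1 + q 2 + q 3 < fuel →
    ∀ r, r ≤ (phaseTraceAux fuel q).length →
    r ≤ 2 * cnt4 ((phaseTraceAux fuel q).take r) + 3 := by
  induction fuel with
  | zero => intro q hq; omega
  | succ n ih =>
    intro q hq r hr
    by_cases hz : q 0 = 0 ∧ q 1 = 0 ∧ q 2 = 0 ∧ q 3 = 0
    · rw [show phaseTraceAux (n+1) q = [none] from by simp [phaseTraceAux, hz]] at hr ⊢
      simp only [List.length_cons, List.length_nil] at hr; omega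
    · have hsum := iter_sum q hz
      have hlen := (iter_spec q hz).2.1
      have hone := (iter_spec q hz).2.2.1
      have hlt : (iterQR q).2 0 + (iterQR q).2 1 + (iterQR q).2 2 + (iterQR q).2 3 < n := by omega
      simp only [phaseTraceAux, hz, if_false, List.length_append, ite_false] at hr ⊢
      rcases le_or_gt r (iterQR q).1.length with hcase | hcase
      · rw [List.take_append_of_le_length hcase]
        have := (iter_spec q hz).2.2.2 r hcase
        omega
      · have hreq : r = (iterQR q).1.length + (r - (iterQR q).1.length) := by omega
        rw [hreq, List.take_length_add_append]
        have hih := ih _ hlt (r - (iterQR q).1.length) (by omega)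
        have hcnt : cnt4 ((iterQR q).1 ++ (phaseTraceAux n (iterQR q).2).take (r - (iterQR q).1.length))
            = cnt4 (iterQR q).1 + cnt4 ((phaseTraceAux n (iterQR q).2).take (r - (iterQR q).1.length)) := by
          simp [cnt4, List.count_append]; omega
        omega

lemma phaseTrace_count (q : ℕ → ℕ) (i : ℕ) (hi : i < 4) :
    (phaseTrace q).count (some i) = q i :=
  trace_count _ q (by omega) i hi

lemma phaseLen_le (q : ℕ → ℕ) : phaseLen q ≤ 2 * (q 0 + q 1 + q 2 + q 3) + 1 :=
  trace_len _ q (by omega)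

lemma phaseTrace_prefix (q : ℕ → ℕ) (r : ℕ) (hr : r ≤ phaseLen q) :
    r ≤ 2 * cnt4 ((phaseTrace q).take r) + 3 :=
  trace_prefix _ q (by omega) r hr

lemma filter_getD (x : Option ℕ) :
    ∀ (l : List (Option ℕ)) (k : ℕ),
    ((List.range l.length).filter fun off => decide (off < k) && decide (l.getD off none = x)).length
      = (l.take k).count x := by
  intro l
  induction l using List.reverseRecOn with
  | nil => intro k; simp
  | append_singleton ys y ih =>
    intro k
    rw [List.length_append, List.length_singleton, List.range_succ, List.filter_append]
    have hcongr : ∀ off ∈ List.range ys.length,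
        (decide (off < k) && decide ((ys ++ [y]).getD off none = x))
          = (decide (off < k) && decide (ys.getD off none = x)) := by
      intro off hoff
      rw [List.mem_range] at hoff
      rw [List.getD_append _ _ _ _ hoff]
    rw [List.filter_congr hcongr]
    have hgd : (ys ++ [y]).getD ys.length none = y := by
      rw [List.getD_append_right _ _ _ _ le_rfl, Nat.sub_self]; rfl
    rw [List.length_append, ih k]
    rcases le_or_gt k ys.length with hk | hk
    · rw [List.take_append_of_le_length hk]
      have hnot : ¬ (ys.length < k) := by omega
      simp [hnot]
    · have h1 : (ys ++ [y]).take k = ys ++ [y] := by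
        apply List.take_of_length_le; simp; omega
      have h2 : ys.take k = ys := List.take_of_length_le (by omega)
      rw [h1, h2, List.count_append]
      by_cases hy : y = x <;> simp [hy, hk, hgd, List.count_cons, Ne.symm] <;> try omega

lemma heardBefore_eq (a : ℕ → ℕ) (v t : ℕ) :
    heardBefore a v t
      = ((phaseTrace (segQ a (v / 4))).take (t - phaseStart a (v / 4))).count (some (v % 4)) := by
  unfold heardBefore
  have hcg : ∀ off ∈ List.range (phaseTrace (segQ a (v / 4))).length,
      (decide (phaseStart a (v / 4) + off < t) &&
        decide ((phaseTrace (segQ a (v / 4))).getD off none = some (v % 4)))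
      = (decide (off < t - phaseStart a (v / 4)) &&
        decide ((phaseTrace (segQ a (v / 4))).getD off none = some (v % 4))) := by
    intro off _
    have hiff : (phaseStart a (v / 4) + off < t) ↔ (off < t - phaseStart a (v / 4)) := by omega
    rw [decide_eq_decide.mpr hiff]
  rw [List.filter_congr hcg, filter_getD (some (v % 4)) _ _]

lemma ps_ge (a : ℕ → ℕ) : ∀ j, 4*j+4 ≤ phaseStart a j
  | 0 => by simp [phaseStart]
  | j+1 => le_max_right _ _

lemma ps_step (a : ℕ → ℕ) (j : ℕ) :
    phaseStart a j + phaseLen (segQ a j) ≤ phaseStart a (j+1) :=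
  le_max_left _ _

lemma ps_char (a : ℕ → ℕ) : ∀ j, ∃ k, k ≤ j ∧
    phaseStart a j = 4*k+4 + ∑ i ∈ Finset.Ico k j, phaseLen (segQ a i) := by
  intro j; induction j with
  | zero => exact ⟨0, le_rfl, by simp [phaseStart]⟩
  | succ n ih =>
    obtain ⟨k, hk, hkeq⟩ := ih
    rcases max_cases (phaseStart a n + phaseLen (segQ a n)) (4*(n+1)+4) with ⟨heq, _⟩ | ⟨heq, _⟩
    · refine ⟨k, by omega, ?_⟩
      show max _ _ = _
      rw [heq, hkeq, Finset.sum_Ico_succ_top hk]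
      omega
    · exact ⟨n+1, le_rfl, by show max _ _ = _; rw [heq]; simp⟩

lemma sum_four (a : ℕ → ℕ) (m : ℕ) :
    ∑ v ∈ Finset.Ico m (m+4), a v = a m + a (m+1) + a (m+2) + a (m+3) := by
  rw [Finset.sum_Ico_eq_sum_range]
  simp [Finset.sum_range_succ]

lemma reindex4 (a : ℕ → ℕ) (k : ℕ) : ∀ j, k ≤ j →
    ∑ i ∈ Finset.Ico k j, (a (4*i) + a (4*i+1) + a (4*i+2) + a (4*i+3))
      = ∑ v ∈ Finset.Ico (4*k) (4*j), a v := by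
  intro j hj
  induction j, hj using Nat.le_induction with
  | base => simp
  | succ n hn ih =>
    rw [Finset.sum_Ico_succ_top hn, ih, show 4*(n+1) = 4*n+4 by ring,
      ← Finset.sum_Ico_consecutive a (by omega : 4*k ≤ 4*n) (by omega : 4*n ≤ 4*n+4),
      sum_four]

/-- there is an absolute constant `C` such that when Quadruple-Round is
executed on a channel with collision detection against a 1-activating adversary of type
`(3/8, b)`, in every round of every admissible execution the total number of packets
stored in the queues of the active stations is at most `b + C`. -/
theorem quadruple_round_queue_bound :
    ∃ C : ℕ, ∀ b : ℕ, 0 < b → ∀ a : ℕ → ℕ, Admissible (3/8) b a → ∀ t : ℕ,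
      (∑ v ∈ Finset.range t, pendingQR a v t) ≤ b + C := by
  refine ⟨3, fun b hb a hadm t => ?_⟩
  have adm8 : ∀ s n : ℕ, 8 * (∑ v ∈ Finset.Ico s (s+n), a v) ≤ 3 * n + 8 * b := by
    intro s n
    have h := hadm s n
    have h8 : (8:ℝ) * ((∑ v ∈ Finset.Ico s (s+n), a v : ℕ) : ℝ) ≤ 3 * n + 8 * b := by
      norm_num at h ⊢; linarith
    exact_mod_cast h8
  have hex : ∃ j, t < phaseStart a j + phaseLen (segQ a j) := ⟨t, by have := ps_ge a t; omega⟩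
  set j0 := Nat.find hex with hj0def
  have hend0 : t < phaseStart a j0 + phaseLen (segQ a j0) := Nat.find_spec hex
  have hmin : ∀ j, j < j0 → phaseStart a j + phaseLen (segQ a j) ≤ t := fun j hj => by
    have := Nat.find_min hex hj; omega
  have hzero : ∀ v, v < 4*j0 → pendingQR a v t = 0 := by
    intro v hv
    have hj : v / 4 < j0 := by omega
    have hendv := hmin (v / 4) hj
    have hlenle : (phaseTrace (segQ a (v / 4))).length ≤ t - phaseStart a (v / 4) := by
      have : (phaseTrace (segQ a (v / 4))).length = phaseLen (segQ a (v / 4)) := rfl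
      omega
    rw [pendingQR, heardBefore_eq, List.take_of_length_le hlenle,
      phaseTrace_count _ _ (by omega : v % 4 < 4)]
    show a v - a (4 * (v / 4) + v % 4) = 0
    rw [Nat.div_add_mod]
    omega
  rcases le_or_gt t (4*j0) with hle | hlt
  · rw [Finset.sum_eq_zero (fun v hv => hzero v (by simp at hv; omega))]
    omega
  · obtain ⟨k, hk, hkeq⟩ := ps_char a j0
    have hs0ge : 4*j0+4 ≤ phaseStart a j0 := ps_ge a j0
    rw [Finset.range_eq_Ico, ← Finset.sum_Ico_consecutive _ (Nat.zero_le (4*j0)) (le_of_lt hlt),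
      Finset.sum_eq_zero (fun v hv => hzero v (by simp [Finset.mem_Ico] at hv; omega)), zero_add]
    have hSL : ∑ i ∈ Finset.Ico k j0, phaseLen (segQ a i)
        ≤ 2 * (∑ v ∈ Finset.Ico (4*k) (4*j0), a v) + (j0 - k) := by
      calc ∑ i ∈ Finset.Ico k j0, phaseLen (segQ a i)
          ≤ ∑ i ∈ Finset.Ico k j0, (2*(a (4*i) + a (4*i+1) + a (4*i+2) + a (4*i+3)) + 1) := by
            refine Finset.sum_le_sum (fun i _ => ?_)
            have h := phaseLen_le (segQ a i)
            have e0 : segQ a i 0 = a (4*i) := by simp [segQ]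
            have e1 : segQ a i 1 = a (4*i+1) := rfl
            have e2 : segQ a i 2 = a (4*i+2) := rfl
            have e3 : segQ a i 3 = a (4*i+3) := rfl
            rw [e0, e1, e2, e3] at h
            omega
        _ = 2 * (∑ i ∈ Finset.Ico k j0, (a (4*i) + a (4*i+1) + a (4*i+2) + a (4*i+3)))
              + (j0 - k) := by
            rw [Finset.sum_add_distrib, ← Finset.mul_sum, Finset.sum_const, Nat.card_Ico,
              smul_eq_mul, mul_one]
        _ = 2 * (∑ v ∈ Finset.Ico (4*k) (4*j0), a v) + (j0 - k) := by
            rw [reindex4 a k j0 hk]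
    have hA : 8 * ((∑ v ∈ Finset.Ico (4*k) (4*j0), a v) + (∑ v ∈ Finset.Ico (4*j0) t, a v))
        ≤ 3*(t - 4*k) + 8*b := by
      rw [Finset.sum_Ico_consecutive a (by omega : 4*k ≤ 4*j0) (le_of_lt hlt)]
      have h := adm8 (4*k) (t - 4*k)
      rw [show 4*k + (t - 4*k) = t by omega] at h
      exact h
    rcases le_or_gt t (phaseStart a j0) with hts | hts
    · have hP : ∑ v ∈ Finset.Ico (4*j0) t, pendingQR a v t
          ≤ ∑ v ∈ Finset.Ico (4*j0) t, a v :=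
        Finset.sum_le_sum (fun v _ => Nat.sub_le _ _)
      omega
    · have hrle : t - phaseStart a j0 ≤ phaseLen (segQ a j0) := by omega
      have hpre := phaseTrace_prefix (segQ a j0) (t - phaseStart a j0) hrle
      have hheq : ∀ i, i < 4 → heardBefore a (4*j0+i) t
          = ((phaseTrace (segQ a j0)).take (t - phaseStart a j0)).count (some i) := by
        intro i hi
        rw [heardBefore_eq]
        rw [show (4*j0+i)/4 = j0 by omega, show (4*j0+i)%4 = i by omega]
      have hhle : ∀ i, i < 4 →
          ((phaseTrace (segQ a j0)).take (t - phaseStart a j0)).count (some i) ≤ a (4*j0+i) := by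
        intro i hi
        calc ((phaseTrace (segQ a j0)).take (t - phaseStart a j0)).count (some i)
            ≤ (phaseTrace (segQ a j0)).count (some i) :=
              (List.take_sublist _ _).count_le _
          _ = segQ a j0 i := phaseTrace_count _ i hi
          _ = a (4*j0+i) := rfl
      have ht4 : 4*j0+4 ≤ t := by omega
      rw [← Finset.sum_Ico_consecutive _ (by omega : 4*j0 ≤ 4*j0+4) ht4]
      have hfirst : ∑ v ∈ Finset.Ico (4*j0) (4*j0+4), pendingQR a v t
          = (a (4*j0) - ((phaseTrace (segQ a j0)).take (t - phaseStart a j0)).count (some 0))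
          + (a (4*j0+1) - ((phaseTrace (segQ a j0)).take (t - phaseStart a j0)).count (some 1))
          + (a (4*j0+2) - ((phaseTrace (segQ a j0)).take (t - phaseStart a j0)).count (some 2))
          + (a (4*j0+3) - ((phaseTrace (segQ a j0)).take (t - phaseStart a j0)).count (some 3)) := by
        rw [sum_four (fun v => pendingQR a v t) (4*j0)]
        have h0 : pendingQR a (4*j0) t
            = a (4*j0) - ((phaseTrace (segQ a j0)).take (t - phaseStart a j0)).count (some 0) := by
          have := hheq 0 (by norm_num)
          simp only [Nat.add_zero] at this
          rw [pendingQR, this]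
        have h1 : pendingQR a (4*j0+1) t
            = a (4*j0+1) - ((phaseTrace (segQ a j0)).take (t - phaseStart a j0)).count (some 1) := by
          rw [pendingQR, hheq 1 (by norm_num)]
        have h2 : pendingQR a (4*j0+2) t
            = a (4*j0+2) - ((phaseTrace (segQ a j0)).take (t - phaseStart a j0)).count (some 2) := by
          rw [pendingQR, hheq 2 (by norm_num)]
        have h3 : pendingQR a (4*j0+3) t
            = a (4*j0+3) - ((phaseTrace (segQ a j0)).take (t - phaseStart a j0)).count (some 3) := by
          rw [pendingQR, hheq 3 (by norm_num)]
        rw [h0, h1, h2, h3]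
      have hsecond : ∑ v ∈ Finset.Ico (4*j0+4) t, pendingQR a v t
          ≤ ∑ v ∈ Finset.Ico (4*j0+4) t, a v :=
        Finset.sum_le_sum (fun v _ => Nat.sub_le _ _)
      have hA2 : ∑ v ∈ Finset.Ico (4*j0) t, a v
          = (a (4*j0) + a (4*j0+1) + a (4*j0+2) + a (4*j0+3))
            + ∑ v ∈ Finset.Ico (4*j0+4) t, a v := by
        rw [← Finset.sum_Ico_consecutive a (by omega : 4*j0 ≤ 4*j0+4) ht4, sum_four]
      have hc0 := hhle 0 (by norm_num)
      have hc1 := hhle 1 (by norm_num)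
      have hc2 := hhle 2 (by norm_num)
      have hc3 := hhle 3 (by norm_num)
      have hcnt : cnt4 ((phaseTrace (segQ a j0)).take (t - phaseStart a j0))
          = ((phaseTrace (segQ a j0)).take (t - phaseStart a j0)).count (some 0)
          + ((phaseTrace (segQ a j0)).take (t - phaseStart a j0)).count (some 1)
          + ((phaseTrace (segQ a j0)).take (t - phaseStart a j0)).count (some 2)
          + ((phaseTrace (segQ a j0)).take (t - phaseStart a j0)).count (some 3) := rfl
      simp only [Nat.add_zero] at hc0
      rw [hcnt] at hpre
      rw [hfirst]
      omega
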